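/- arXiv:1402.3969 — 5 statements merged into one kernel-verified Lean document; each statement's English description precedes it below -/
import Mathlib

section
/- If k ≥ 2, A_i ⊆ 2^{[n_i]} for each i ∈ [k], and A_1, ..., A_k are cross-intersecting, then ∏_{i=1}^k |A_i| ≤ 2^{(∑_{i=1}^k n_i) - k}. -/
open Finset

lemma cross_sum_bound (n : ℕ) (A B : Finset (Finset ℕ))
    (hA : ∀ a ∈ A, a ⊆ Finset.Icc 1 n) (hB : ∀ b ∈ B, b ⊆ Finset.Icc 1 n)
    (hcross : ∀ a ∈ A, ∀ b ∈ B, (a ∩ b).Nonempty) :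
    A.card + B.card ≤ 2 ^ n := by
  classical
  set U := Finset.Icc 1 n with hU
  set A' := U.powerset.filter (fun s => ∃ a ∈ A, a ⊆ s) with hA'
  set D := B.image (fun b => U \ b) with hD
  have hAsub : A ⊆ A' := by
    intro a ha
    simp only [hA', mem_filter, mem_powerset]
    exact ⟨hA a ha, a, ha, Finset.Subset.refl a⟩
  have hDcard : D.card = B.card := by
    apply Finset.card_image_of_injOn
    intro b hb c hc h
    have h' : U \ b = U \ c := h
    have h2 : U \ (U \ b) = U \ (U \ c) := by rw [h']
    rwa [Finset.sdiff_sdiff_eq_self (hB b hb),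
      Finset.sdiff_sdiff_eq_self (hB c hc)] at h2
  have hdisj : Disjoint A' D := by
    rw [Finset.disjoint_left]
    intro s hs hsD
    obtain ⟨b, hb, rfl⟩ := Finset.mem_image.mp hsD
    simp only [hA', mem_filter, mem_powerset] at hs
    obtain ⟨-, a, ha, hab⟩ := hs
    obtain ⟨x, hx⟩ := hcross a ha b hb
    rw [Finset.mem_inter] at hx
    have h3 := hab hx.1
    rw [Finset.mem_sdiff] at h3
    exact h3.2 hx.2
  have hcup : A' ∪ D ⊆ U.powerset := by
    intro s hs
    rcases Finset.mem_union.mp hs with h | h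
    · exact Finset.mem_powerset.mpr (Finset.mem_powerset.mp (Finset.mem_filter.mp h).1)
    · obtain ⟨b, hb, rfl⟩ := Finset.mem_image.mp h
      exact Finset.mem_powerset.mpr Finset.sdiff_subset
  have h1 : A.card ≤ A'.card := Finset.card_le_card hAsub
  have h2 : (A' ∪ D).card = A'.card + D.card := Finset.card_union_of_disjoint hdisj
  have h3 : (A' ∪ D).card ≤ U.powerset.card := Finset.card_le_card hcup
  have h4 : U.powerset.card = 2 ^ n := by
    rw [Finset.card_powerset, hU, Nat.card_Icc]
    congr 1
  omega

lemma cross_prod_same (n : ℕ) (hn : 1 ≤ n) (A B : Finset (Finset ℕ))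
    (hA : ∀ a ∈ A, a ⊆ Finset.Icc 1 n) (hB : ∀ b ∈ B, b ⊆ Finset.Icc 1 n)
    (hcross : ∀ a ∈ A, ∀ b ∈ B, (a ∩ b).Nonempty) :
    A.card * B.card ≤ 2 ^ (2 * n - 2) := by
  have h := cross_sum_bound n A B hA hB hcross
  have h2 : (2 : ℕ) ^ n = 2 * 2 ^ (n - 1) := by
    conv_lhs => rw [show n = (n - 1) + 1 by omega]
    ring
  have key : A.card * B.card ≤ 2 ^ (n - 1) * 2 ^ (n - 1) := by
    rw [h2] at h
    zify at h ⊢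
    nlinarith [h, sq_nonneg ((A.card : ℤ) - B.card)]
  calc A.card * B.card ≤ 2 ^ (n - 1) * 2 ^ (n - 1) := key
    _ = 2 ^ (2 * n - 2) := by rw [← pow_add]; congr 1; omega

lemma cross_prod_two_aux (n m : ℕ) (hn : 1 ≤ n) (hnm : n ≤ m)
    (A B : Finset (Finset ℕ))
    (hA : ∀ a ∈ A, a ⊆ Finset.Icc 1 n) (hB : ∀ b ∈ B, b ⊆ Finset.Icc 1 m)
    (hcross : ∀ a ∈ A, ∀ b ∈ B, (a ∩ b).Nonempty) :
    A.card * B.card ≤ 2 ^ (n + m - 2) := by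
  classical
  set U := Finset.Icc 1 n with hU
  set B' := B.image (fun b => b ∩ U) with hB'def
  have hB'sub : ∀ b' ∈ B', b' ⊆ U := by
    intro b' hb'
    obtain ⟨b, hb, rfl⟩ := Finset.mem_image.mp hb'
    exact Finset.inter_subset_right
  have hcross' : ∀ a ∈ A, ∀ b' ∈ B', (a ∩ b').Nonempty := by
    intro a ha b' hb'
    obtain ⟨b, hb, rfl⟩ := Finset.mem_image.mp hb'
    obtain ⟨x, hx⟩ := hcross a ha b hb
    rw [Finset.mem_inter] at hx
    exact ⟨x, by simp only [Finset.mem_inter]; exact ⟨hx.1, hx.2, hA a ha hx.1⟩⟩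
  have htrace : B.card ≤ B'.card * 2 ^ (m - n) := by
    have hle : B.card ≤ (B' ×ˢ (Finset.Icc (n + 1) m).powerset).card := by
      apply Finset.card_le_card_of_injOn (fun b => (b ∩ U, b \ U))
      · intro b hb
        rw [Finset.mem_coe] at hb ⊢
        rw [Finset.mem_product]
        refine ⟨Finset.mem_image_of_mem _ hb, ?_⟩
        rw [Finset.mem_powerset]
        intro x hx
        rw [Finset.mem_sdiff] at hx
        have h1 := hB b hb hx.1
        rw [Finset.mem_Icc] at h1
        have h2 := hx.2
        rw [hU, Finset.mem_Icc] at h2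
        rw [Finset.mem_Icc]
        omega
      · intro b hb c hc h
        have hh1 : b ∩ U = c ∩ U := (Prod.ext_iff.mp h).1
        have hh2 : b \ U = c \ U := (Prod.ext_iff.mp h).2
        have h1 : b ∩ U ∪ b \ U = c ∩ U ∪ c \ U := by rw [hh1, hh2]
        have key : ∀ s : Finset ℕ, s ∩ U ∪ s \ U = s := fun s => by
          rw [Finset.union_comm, Finset.sdiff_union_inter]
        rwa [key, key] at h1
    calc B.card ≤ _ := hle
      _ = B'.card * 2 ^ (m - n) := by
          rw [Finset.card_product, Finset.card_powerset, Nat.card_Icc,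
            show m + 1 - (n + 1) = m - n by omega]
  have h1 : A.card * B'.card ≤ 2 ^ (2 * n - 2) :=
    cross_prod_same n hn A B' hA hB'sub hcross'
  calc A.card * B.card ≤ A.card * (B'.card * 2 ^ (m - n)) :=
        Nat.mul_le_mul_left _ htrace
    _ = (A.card * B'.card) * 2 ^ (m - n) := by ring
    _ ≤ 2 ^ (2 * n - 2) * 2 ^ (m - n) := Nat.mul_le_mul_right _ h1
    _ = 2 ^ (n + m - 2) := by rw [← pow_add]; congr 1; omega

lemma cross_prod_two (n m : ℕ) (hn : 1 ≤ n) (hm : 1 ≤ m)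
    (A B : Finset (Finset ℕ))
    (hA : ∀ a ∈ A, a ⊆ Finset.Icc 1 n) (hB : ∀ b ∈ B, b ⊆ Finset.Icc 1 m)
    (hcross : ∀ a ∈ A, ∀ b ∈ B, (a ∩ b).Nonempty) :
    A.card * B.card ≤ 2 ^ (n + m - 2) := by
  rcases le_total n m with h | h
  · exact cross_prod_two_aux n m hn h A B hA hB hcross
  · rw [mul_comm, show n + m - 2 = m + n - 2 by omega]
    exact cross_prod_two_aux m n hm h B A hB hA
      (fun b hb a ha => by rw [Finset.inter_comm]; exact hcross a ha b hb)

/-- `k ≥ 2` cross-intersecting families `A_i ⊆ 2^{[n_i]}` satisfy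
`∏ |A_i| ≤ 2^{(∑ n_i) - k}`. -/
theorem cross_intersecting_k_families_powerset_bound
    (k : ℕ) (hk : 2 ≤ k) (n : Fin k → ℕ) (hn : ∀ i, 1 ≤ n i)
    (𝒜 : Fin k → Finset (Finset ℕ))
    (h𝒜 : ∀ i, ∀ A ∈ 𝒜 i, A ⊆ Finset.Icc 1 (n i))
    (hcross : ∀ i j, i ≠ j → ∀ A ∈ 𝒜 i, ∀ B ∈ 𝒜 j, (A ∩ B).Nonempty) :
    ∏ i, (𝒜 i).card ≤ 2 ^ ((∑ i, n i) - k) := by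
  induction k, hk using Nat.le_induction with
  | base =>
    rw [Fin.prod_univ_two, Fin.sum_univ_two]
    have h01 : (0 : Fin 2) ≠ 1 := by decide
    exact cross_prod_two (n 0) (n 1) (hn 0) (hn 1) (𝒜 0) (𝒜 1) (h𝒜 0) (h𝒜 1)
      (hcross 0 1 h01)
  | succ k hk2 IH =>
    have hsmall : ∃ i, (𝒜 i).card ≤ 2 ^ (n i - 1) := by
      by_contra hcon
      push_neg at hcon
      set i0 : Fin (k + 1) := ⟨0, by omega⟩
      set i1 : Fin (k + 1) := ⟨1, by omega⟩
      have hne : i0 ≠ i1 := by simp [i0, i1, Fin.ext_iff]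
      have hb := cross_prod_two (n i0) (n i1) (hn i0) (hn i1) (𝒜 i0) (𝒜 i1)
        (h𝒜 i0) (h𝒜 i1) (hcross i0 i1 hne)
      have hlt : 2 ^ (n i0 + n i1 - 2) < (𝒜 i0).card * (𝒜 i1).card := by
        have hmul : 2 ^ (n i0 - 1) * 2 ^ (n i1 - 1) < (𝒜 i0).card * (𝒜 i1).card :=
          Nat.mul_lt_mul_of_lt_of_lt (hcon i0) (hcon i1)
        calc 2 ^ (n i0 + n i1 - 2) = 2 ^ (n i0 - 1) * 2 ^ (n i1 - 1) := by
              rw [← pow_add]; congr 1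
              have := hn i0; have := hn i1; omega
          _ < _ := hmul
      omega
    obtain ⟨i, hi⟩ := hsmall
    rw [Fin.prod_univ_succAbove (fun j => (𝒜 j).card) i,
      Fin.sum_univ_succAbove n i]
    have hIH := IH (fun j => n (i.succAbove j)) (fun j => hn _)
      (fun j => 𝒜 (i.succAbove j)) (fun j => h𝒜 _)
      (fun a b hab => hcross _ _ (fun h => hab (Fin.succAbove_right_injective h)))
    have hsum : k ≤ ∑ j, n (i.succAbove j) := by
      calc k = ∑ _j : Fin k, 1 := by simp
        _ ≤ _ := Finset.sum_le_sum (fun j _ => hn _)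
    calc (𝒜 i).card * ∏ j, (𝒜 (i.succAbove j)).card
        ≤ 2 ^ (n i - 1) * 2 ^ ((∑ j, n (i.succAbove j)) - k) :=
          Nat.mul_le_mul hi hIH
      _ = 2 ^ (n i + ∑ j, n (i.succAbove j) - (k + 1)) := by
          rw [← pow_add]; congr 1
          have := hn i; omega
end

section
/- If X and Y are bases of a hereditary family H (i.e., maximal members of H with respect to inclusion), x ∈ X, and x ∉ Y, then |H(x)| < |H|/2, where H(x) = {H' ∈ H : x ∈ H'}. -/
/-- If `X` and `Y` are bases of a hereditary family `H`, `x ∈ X` and `x ∉ Y`,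
then `|H(x)| < |H|/2`, i.e. `2·|H(x)| < |H|`. -/
theorem hereditary_two_bases_star_lt_half
    (H : Finset (Finset ℕ))
    (hher : ∀ S ∈ H, ∀ T ⊆ S, T ∈ H)
    (X Y : Finset ℕ)
    (hX : X ∈ H) (hXbase : ∀ S ∈ H, X ⊆ S → X = S)
    (hY : Y ∈ H) (hYbase : ∀ S ∈ H, Y ⊆ S → Y = S)
    (x : ℕ) (hxX : x ∈ X) (hxY : x ∉ Y) :
    2 * (H.filter (fun S => x ∈ S)).card < H.card := by
  classical
  have hYmem : Y ∈ H.filter (fun S => x ∉ S) := by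
    simp [Finset.mem_filter, hY, hxY]
  -- Injection S ↦ S.erase x from H(x) into (filter (x ∉ ·) H).erase Y
  have hle : (H.filter (fun S => x ∈ S)).card ≤
      ((H.filter (fun S => x ∉ S)).erase Y).card := by
    apply Finset.card_le_card_of_injOn (fun S => S.erase x)
    · intro S hS
      rw [Finset.mem_coe, Finset.mem_filter] at hS
      obtain ⟨hSH, hxS⟩ := hS
      have hSe : S.erase x ∈ H := hher S hSH _ (Finset.erase_subset _ _)
      beta_reduce
      rw [Finset.mem_coe, Finset.mem_erase]
      refine ⟨?_, by simp [Finset.mem_filter, hSe]⟩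
      intro hEq
      have hins : insert x (S.erase x) ∈ H := by
        rw [Finset.insert_erase hxS]; exact hSH
      rw [hEq] at hins
      have := hYbase _ hins (Finset.subset_insert _ _)
      exact hxY (this ▸ Finset.mem_insert_self x Y)
    · intro S1 h1 S2 h2 hEq
      rw [Finset.coe_filter, Set.mem_setOf_eq] at h1 h2
      have : insert x (S1.erase x) = insert x (S2.erase x) := congrArg (insert x) hEq
      rwa [Finset.insert_erase h1.2, Finset.insert_erase h2.2] at this
  have hlt : (H.filter (fun S => x ∈ S)).card < (H.filter (fun S => x ∉ S)).card := by
    calc (H.filter (fun S => x ∈ S)).card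
        ≤ ((H.filter (fun S => x ∉ S)).erase Y).card := hle
      _ < (H.filter (fun S => x ∉ S)).card :=
          Finset.card_erase_lt_of_mem hYmem
  have hsum := Finset.card_filter_add_card_filter_not
    (s := H) (p := fun S => x ∈ S)
  omega
end

section
/- If A and B are cross-intersecting subfamilies of 2^{[n]}, then |A|·|B| ≤ 4^{n-1}, i.e., |A|·|B| ≤ (2^{n-1})^2. -/
/-- Cross-intersecting subfamilies of `2^{[n]}` satisfy `|A|·|B| ≤ (2^{n-1})^2`. -/
theorem cross_intersecting_powerset_product_bound
    (n : ℕ) (hn : 1 ≤ n) (𝒜 ℬ : Finset (Finset ℕ))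
    (h𝒜 : ∀ A ∈ 𝒜, A ⊆ Finset.Icc 1 n)
    (hℬ : ∀ B ∈ ℬ, B ⊆ Finset.Icc 1 n)
    (hcross : ∀ A ∈ 𝒜, ∀ B ∈ ℬ, (A ∩ B).Nonempty) :
    𝒜.card * ℬ.card ≤ (2 ^ (n - 1)) ^ 2 := by
  set U := Finset.Icc 1 n with hU
  have hUcard : U.card = n := by simp [hU]
  -- complements of 𝒜
  set 𝒞 := 𝒜.image (fun A => U \ A) with h𝒞
  have hinj : ∀ A ∈ 𝒜, ∀ A' ∈ 𝒜, U \ A = U \ A' → A = A' := by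
    intro A hA A' hA' h
    have h1 : U \ (U \ A) = U \ (U \ A') := by rw [h]
    rwa [Finset.sdiff_sdiff_eq_self (h𝒜 A hA),
      Finset.sdiff_sdiff_eq_self (h𝒜 A' hA')] at h1
  have h𝒞card : 𝒞.card = 𝒜.card := Finset.card_image_of_injOn hinj
  have hdisj : Disjoint 𝒞 ℬ := by
    rw [Finset.disjoint_left]
    intro C hC hCB
    simp only [h𝒞, Finset.mem_image] at hC
    obtain ⟨A, hA, rfl⟩ := hC
    obtain ⟨x, hx⟩ := hcross A hA _ hCB
    simp only [Finset.mem_inter, Finset.mem_sdiff] at hx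
    exact hx.2.2 hx.1
  have hsub : 𝒞 ∪ ℬ ⊆ U.powerset := by
    intro S hS
    rcases Finset.mem_union.1 hS with h | h
    · simp only [h𝒞, Finset.mem_image] at h
      obtain ⟨A, hA, rfl⟩ := h
      exact Finset.mem_powerset.2 (Finset.sdiff_subset)
    · exact Finset.mem_powerset.2 (hℬ _ h)
  have hsum : 𝒜.card + ℬ.card ≤ 2 ^ n := by
    have := Finset.card_le_card hsub
    rwa [Finset.card_union_of_disjoint hdisj, Finset.card_powerset, hUcard, h𝒞card] at this
  have h4 : 4 * (𝒜.card * ℬ.card) ≤ (𝒜.card + ℬ.card) ^ 2 := by nlinarith [sq_nonneg (𝒜.card - ℬ.card : ℤ)]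
  have key : 4 * (𝒜.card * ℬ.card) ≤ 4 * (2 ^ (n - 1)) ^ 2 := by
    calc 4 * (𝒜.card * ℬ.card) ≤ (𝒜.card + ℬ.card) ^ 2 := h4
    _ ≤ (2 ^ n) ^ 2 := Nat.pow_le_pow_left hsum 2
    _ = 4 * (2 ^ (n - 1)) ^ 2 := by
        obtain ⟨m, rfl⟩ : ∃ m, n = m + 1 := ⟨n - 1, (Nat.succ_pred_eq_of_pos hn).symm⟩
        simp only [Nat.add_sub_cancel]; ring
  omega
end

section
/- Let G ⊆ 2^{[n]} be hereditary and compressed with [n] ∉ G. Let g_0 = |{S ∈ G : 1 ∈ S, n ∉ S}| and g_1 = |{S ∈ G : 1 ∈ S, n ∈ S}|. If g_1 > 0 then g_0 > g_1 (i.e., g_0 ≠ g_1). -/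
/-- For a hereditary compressed `G ⊆ 2^{[n]}` with `[n] ∉ G`: if
`g_1 = |{S ∈ G : 1 ∈ S, n ∈ S}| > 0` then `g_0 = |{S ∈ G : 1 ∈ S, n ∉ S}| > g_1`. -/
theorem hereditary_compressed_g0_gt_g1
    (n : ℕ) (𝒢 : Finset (Finset ℕ))
    (hground : ∀ S ∈ 𝒢, S ⊆ Finset.Icc 1 n)
    (hher : ∀ S ∈ 𝒢, ∀ T ⊆ S, T ∈ 𝒢)
    (hcomp : ∀ i j, 1 ≤ i → i < j → j ≤ n →
      ∀ S ∈ 𝒢, j ∈ S → i ∉ S → insert i (S.erase j) ∈ 𝒢)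
    (hfull : Finset.Icc 1 n ∉ 𝒢)
    (hg1 : 0 < (𝒢.filter (fun S => 1 ∈ S ∧ n ∈ S)).card) :
    (𝒢.filter (fun S => 1 ∈ S ∧ n ∈ S)).card <
      (𝒢.filter (fun S => 1 ∈ S ∧ n ∉ S)).card := by
  set A := 𝒢.filter (fun S => 1 ∈ S ∧ n ∈ S) with hA
  set B := 𝒢.filter (fun S => 1 ∈ S ∧ n ∉ S) with hB
  have hAne : A.Nonempty := Finset.card_pos.mp hg1
  -- n ≥ 2
  have hn2 : 2 ≤ n := by
    obtain ⟨S, hS⟩ := hAne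
    simp only [hA, Finset.mem_filter] at hS
    obtain ⟨hSG, h1S, hnS⟩ := hS
    by_contra h
    interval_cases n
    · exact absurd (hground S hSG hnS) (by simp)
    · have : S = Finset.Icc 1 1 := by
        apply Finset.Subset.antisymm (hground S hSG)
        intro x hx; simp at hx; simpa [hx]
      exact hfull (this ▸ hSG)
  have h1n : (1 : ℕ) ≠ n := by omega
  -- pick U in A of maximal cardinality
  obtain ⟨U, hUA, hUmax⟩ := A.exists_max_image (fun S => S.card) hAne
  simp only [hA, Finset.mem_filter] at hUA
  obtain ⟨hUG, h1U, hnU⟩ := hUA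
  -- U ≠ [n], so pick i ∈ [n] \ U
  have hUne : U ≠ Finset.Icc 1 n := fun h => hfull (h ▸ hUG)
  obtain ⟨i, hiI, hiU⟩ : ∃ i ∈ Finset.Icc 1 n, i ∉ U := by
    by_contra h
    push_neg at h
    exact hUne (Finset.Subset.antisymm (hground U hUG) h)
  simp only [Finset.mem_Icc] at hiI
  have hin : i < n := lt_of_le_of_ne hiI.2 (fun h => hiU (h ▸ hnU))
  set T := insert i (U.erase n) with hT
  have hTG : T ∈ 𝒢 := hcomp i n hiI.1 hin le_rfl U hUG hnU hiU
  have h1T : 1 ∈ T := Finset.mem_insert_of_mem (Finset.mem_erase.mpr ⟨h1n, h1U⟩)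
  have hnT : n ∉ T := by
    simp only [hT, Finset.mem_insert, Finset.mem_erase]
    push_neg
    exact ⟨fun h => (h ▸ hin).false, fun h => absurd rfl h⟩
  have hTB : T ∈ B := Finset.mem_filter.mpr ⟨hTG, h1T, hnT⟩
  -- insert n T ∉ 𝒢
  have hnTG : insert n T ∉ 𝒢 := by
    intro hmem
    have heq : insert n T = insert i U := by
      rw [hT, Finset.insert_comm, Finset.insert_erase hnU]
    rw [heq] at hmem
    have : insert i U ∈ A := Finset.mem_filter.mpr
      ⟨hmem, Finset.mem_insert_of_mem h1U, Finset.mem_insert_of_mem hnU⟩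
    have := hUmax _ this
    simp [Finset.card_insert_of_notMem hiU] at this
  -- the injection
  have himsub : A.image (fun S => S.erase n) ⊆ B := by
    intro X hX
    simp only [Finset.mem_image] at hX
    obtain ⟨S, hS, rfl⟩ := hX
    simp only [hA, Finset.mem_filter] at hS
    obtain ⟨hSG, h1S, hnS⟩ := hS
    exact Finset.mem_filter.mpr ⟨hher S hSG _ (Finset.erase_subset _ _),
      Finset.mem_erase.mpr ⟨h1n, h1S⟩, Finset.notMem_erase _ _⟩
  have hTnot : T ∉ A.image (fun S => S.erase n) := by
    intro h
    simp only [Finset.mem_image] at h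
    obtain ⟨S, hS, hST⟩ := h
    simp only [hA, Finset.mem_filter] at hS
    obtain ⟨hSG, h1S, hnS⟩ := hS
    have : insert n T = S := by rw [← hST, Finset.insert_erase hnS]
    exact hnTG (this ▸ hSG)
  have hss : A.image (fun S => S.erase n) ⊂ B :=
    ⟨himsub, fun h => hTnot (h hTB)⟩
  have hinj : (A.image (fun S => S.erase n)).card = A.card := by
    apply Finset.card_image_of_injOn
    intro S hS S' hS' h
    simp only [hA, Finset.coe_filter, Set.mem_setOf_eq] at hS hS'
    rw [← Finset.insert_erase hS.2.2, ← Finset.insert_erase hS'.2.2, show S.erase n = S'.erase n from h]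
  calc A.card = (A.image (fun S => S.erase n)).card := hinj.symm
    _ < B.card := Finset.card_lt_card hss
end

section
/- Suppose A, B ⊆ 2^{[n]} are cross-intersecting and B is compressed. If A' ∈ A with n ∈ A' and B' ⊆ [n-1] satisfies B' ∪ {n} ∈ B and (A' \ {n}) ∩ B' = ∅, then B' = [n-1] \ (A' \ {n}). That is, B' must be the full complement of A' \ {n} in [n-1]. -/
/-- Uniqueness of the "bad" partner: if `A`, `B ⊆ 2^{[n]}` are cross-intersecting,
`B` is compressed, `A' ∈ A` with `n ∈ A'`, `B' ⊆ [n-1]`, `B' ∪ {n} ∈ B` and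
`(A' \ {n}) ∩ B' = ∅`, then `B' = [n-1] \ (A' \ {n})`. -/
theorem bad_partner_unique
    (n : ℕ) (hn : 1 ≤ n) (𝒜 ℬ : Finset (Finset ℕ))
    (h𝒜 : ∀ A ∈ 𝒜, A ⊆ Finset.Icc 1 n)
    (hℬ : ∀ B ∈ ℬ, B ⊆ Finset.Icc 1 n)
    (hcross : ∀ A ∈ 𝒜, ∀ B ∈ ℬ, (A ∩ B).Nonempty)
    (hℬcomp : ∀ i j, 1 ≤ i → i < j → j ≤ n →
      ∀ S ∈ ℬ, j ∈ S → i ∉ S → insert i (S.erase j) ∈ ℬ)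
    (A' : Finset ℕ) (hA' : A' ∈ 𝒜) (hnA' : n ∈ A')
    (B' : Finset ℕ) (hB'sub : B' ⊆ Finset.Icc 1 (n - 1))
    (hB'mem : insert n B' ∈ ℬ)
    (hdisj : (A'.erase n) ∩ B' = ∅) :
    B' = Finset.Icc 1 (n - 1) \ (A'.erase n) := by
  have hnB' : n ∉ B' := by
    intro h
    have := hB'sub h
    simp only [Finset.mem_Icc] at this
    omega
  apply Finset.Subset.antisymm
  · intro x hx
    have hx1 := hB'sub hx
    simp only [Finset.mem_Icc] at hx1
    simp only [Finset.mem_sdiff, Finset.mem_Icc]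
    refine ⟨⟨hx1.1, hx1.2⟩, fun hxA => ?_⟩
    have : x ∈ (A'.erase n) ∩ B' := Finset.mem_inter.mpr ⟨hxA, hx⟩
    simp [hdisj] at this
  · intro i hi
    simp only [Finset.mem_sdiff, Finset.mem_Icc] at hi
    obtain ⟨⟨hi1, hi2⟩, hiA⟩ := hi
    by_contra hiB
    have hilt : i < n := by omega
    have hiS : i ∉ insert n B' := by
      simp only [Finset.mem_insert]
      push_neg
      exact ⟨by omega, hiB⟩
    have hmem : insert i ((insert n B').erase n) ∈ ℬ :=
      hℬcomp i n hi1 hilt le_rfl _ hB'mem (Finset.mem_insert_self _ _) hiS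
    rw [Finset.erase_insert hnB'] at hmem
    obtain ⟨x, hx⟩ := hcross A' hA' _ hmem
    simp only [Finset.mem_inter, Finset.mem_insert] at hx
    obtain ⟨hxA, hxi | hxB⟩ := hx
    · subst hxi
      exact hiA (Finset.mem_erase.mpr ⟨by omega, hxA⟩)
    · have hxn : x ≠ n := by
        intro h; subst h; exact hnB' hxB
      have : x ∈ (A'.erase n) ∩ B' :=
        Finset.mem_inter.mpr ⟨Finset.mem_erase.mpr ⟨hxn, hxA⟩, hxB⟩
      simp [hdisj] at this
end
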